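/- arXiv:1503.02170 — 6 statements merged into one kernel-verified Lean document; each statement's English description precedes it below -/
import Mathlib

section
/- Let m, n be positive integers and let A be an m×n matrix with integer entries, regarded as a ℤ-linear map f : ℤ^n → ℤ^m. Then the following are equivalent: (1) there exists an n×m integer matrix B with A·B equal to the m×m identity matrix (equivalently, a ℤ-linear map g : ℤ^m → ℤ^n with f∘g = id); (2) m ≤ n and the greatest common divisor of all m×m minors of A (the determinants of the m×m submatrices of A obtained by selecting m of the n columns) is 1. -/
open Finset Matrix


/-- Bezout for finset gcd over ℤ. -/
lemma exists_sum_eq_finset_gcd {ι : Type*} [DecidableEq ι] (s : Finset ι) (f : ι → ℤ) :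
    ∃ μ : ι → ℤ, ∑ i ∈ s, μ i * f i = s.gcd f := by
  induction s using Finset.cons_induction with
  | empty => exact ⟨0, by simp⟩
  | cons a s ha ih =>
    obtain ⟨μ, hμ⟩ := ih
    obtain ⟨u, v, huv⟩ : ∃ u v : ℤ, GCDMonoid.gcd (f a) (s.gcd f) =
        f a * u + s.gcd f * v := by
      refine ⟨Int.gcdA (f a) (s.gcd f), Int.gcdB (f a) (s.gcd f), ?_⟩
      rw [← Int.coe_gcd, Int.gcd_eq_gcd_ab]
    refine ⟨fun i => if i = a then u else v * μ i, ?_⟩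
    rw [Finset.sum_cons, Finset.cons_eq_insert, Finset.gcd_insert, huv]
    have h2 : ∑ x ∈ s, (if x = a then u else v * μ x) * f x = s.gcd f * v := by
      rw [← hμ, Finset.sum_mul]
      exact Finset.sum_congr rfl fun i hi => by
        rw [if_neg (show i ≠ a by rintro rfl; exact ha hi)]; ring
    simp only [h2, if_pos rfl, if_true]
    ring

/-- Key identity: `A * B_c = det(A_c) • 1`. -/
lemma mul_adj_embed {m n : ℕ} (A : Matrix (Fin m) (Fin n) ℤ) (c : Fin m → Fin n) :
    A * (Matrix.of fun i j => ∑ k, if i = c k then (A.submatrix id c).adjugate k j else 0)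
      = (A.submatrix id c).det • (1 : Matrix (Fin m) (Fin m) ℤ) := by
  have := Matrix.mul_adjugate (A.submatrix id c)
  ext i j
  rw [← this]
  simp only [Matrix.mul_apply, Matrix.of_apply, Finset.mul_sum, Matrix.submatrix_apply, id]
  rw [Finset.sum_comm]
  refine Finset.sum_congr rfl fun k _ => ?_
  simp [mul_ite, eq_comm]

lemma exists_mono_minor_ne_zero {K : Type*} [Field K] {m n : ℕ}
    (M : Matrix (Fin m) (Fin n) K) (hsur : Function.Surjective M.mulVec) :
    ∃ c : Fin m → Fin n, (∀ a b : Fin m, a < b → c a < c b) ∧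
      (M.submatrix id c).det ≠ 0 := by
  have hspan : Submodule.span K (Set.range Mᵀ) = ⊤ := by
    rw [show Set.range Mᵀ = Set.range M.col from rfl, ← Matrix.range_mulVecLin]
    exact LinearMap.range_eq_top.2 (by exact hsur)
  obtain ⟨b, hbsub, hbspan, hbli⟩ := exists_linearIndependent K (Set.range Mᵀ)
  haveI : Fintype b := ((Set.finite_range Mᵀ).subset hbsub).fintype
  let bas : Module.Basis b K (Fin m → K) :=
    Module.Basis.mk hbli (by rw [Subtype.range_coe, hbspan, hspan])
  have hcard : Fintype.card b = m := by
    rw [← Module.finrank_eq_card_basis bas, Module.finrank_fintype_fun_eq_card,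
      Fintype.card_fin]
  have hpre : ∀ x : b, ∃ j : Fin n, Mᵀ j = (x : Fin m → K) := fun x => hbsub x.2
  choose pick hpick using hpre
  let e : Fin m ≃ b := (Fintype.equivFinOfCardEq hcard).symm
  set c' : Fin m → Fin n := fun k => pick (e k) with hc'
  have hc'inj : Function.Injective c' := by
    intro x y h
    apply e.injective
    apply Subtype.ext
    rw [← hpick (e x), ← hpick (e y)]
    exact congrArg _ h
  have hcols : ∀ k, (M.submatrix id c')ᵀ k = ((e k : Fin m → K)) := by
    intro k
    funext i
    have := congrFun (hpick (e k)) i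
    simpa [Matrix.transpose_apply] using this
  have hli' : LinearIndependent K (fun k => (M.submatrix id c')ᵀ k) := by
    have h2 : (fun k => (M.submatrix id c')ᵀ k)
        = (fun x : b => (x : Fin m → K)) ∘ e := funext hcols
    rw [h2]
    exact hbli.comp e e.injective
  have hunit : IsUnit (M.submatrix id c') :=
    Matrix.linearIndependent_cols_iff_isUnit.1 hli'
  have hdet' : (M.submatrix id c').det ≠ 0 :=
    isUnit_iff_ne_zero.1 ((Matrix.isUnit_iff_isUnit_det _).1 hunit)
  -- sort c' into a strictly monotone selection
  set s : Finset (Fin n) := Finset.image c' Finset.univ with hs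
  have hcards : s.card = m := by
    rw [hs, Finset.card_image_of_injective _ hc'inj, Finset.card_univ, Fintype.card_fin]
  set c : Fin m → Fin n := fun k => (s.orderIsoOfFin hcards k : Fin n) with hc
  have hcmono : ∀ a b : Fin m, a < b → c a < c b := fun a b h =>
    Subtype.coe_lt_coe.2 ((s.orderIsoOfFin hcards).strictMono h)
  let ec : Fin m ≃ s := (s.orderIsoOfFin hcards).toEquiv
  have hmem : ∀ k, c' k ∈ s := fun k => Finset.mem_image_of_mem _ (Finset.mem_univ k)
  let ec' : Fin m ≃ s := Equiv.ofBijective (fun k => (⟨c' k, hmem k⟩ : s))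
    ((Fintype.bijective_iff_injective_and_card _).2
      ⟨fun x y h => hc'inj (Subtype.ext_iff.1 h), by
        rw [Fintype.card_coe, hcards, Fintype.card_fin]⟩)
  let π : Equiv.Perm (Fin m) := ec'.trans ec.symm
  have hcomp : c ∘ π = c' := by
    funext k
    show ((ec (ec.symm (ec' k)) : Fin n)) = c' k
    rw [ec.apply_symm_apply]
    rfl
  refine ⟨c, hcmono, ?_⟩
  intro h0
  apply hdet'
  have : M.submatrix id c' = (M.submatrix id c).submatrix id π := by
    rw [Matrix.submatrix_submatrix, Function.comp_id, hcomp]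
  rw [this, Matrix.det_permute', h0, mul_zero]

/-- For an `m × n` integer matrix `A` (with `m, n ≥ 1`), there exists an
`n × m` integer matrix `B` with `A * B = 1` if and only if `m ≤ n` and the gcd of all
`m × m` minors of `A` (determinants of submatrices obtained by selecting `m` of the `n`
columns, i.e. via strictly monotone column selections) is `1`. -/
theorem stmt0 (m n : ℕ) (hm : 0 < m) (hn : 0 < n) (A : Matrix (Fin m) (Fin n) ℤ) :
    (∃ B : Matrix (Fin n) (Fin m) ℤ, A * B = 1) ↔
      (m ≤ n ∧
        Finset.gcd
          ((Finset.univ : Finset (Fin m → Fin n)).filter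
            (fun c => ∀ a b : Fin m, a < b → c a < c b))
          (fun c => (A.submatrix id c).det) = 1) := by
  set S := ((Finset.univ : Finset (Fin m → Fin n)).filter
            (fun c => ∀ a b : Fin m, a < b → c a < c b)) with hS
  constructor
  · rintro ⟨B, hB⟩
    -- transfer to a field K
    have hfield : ∀ (K : Type) [inst : Field K],
        ∃ c : Fin m → Fin n, (∀ a b : Fin m, a < b → c a < c b) ∧
          ((A.map (Int.cast : ℤ → K)).submatrix id c).det ≠ 0 := by
      intro K _
      have h1 : (A.map (Int.cast : ℤ → K)) * (B.map (Int.cast : ℤ → K)) = 1 := by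
        have h2 := (Matrix.map_mul (L := A) (M := B) (f := Int.castRingHom K)).symm
        rw [hB, Matrix.map_one _ (map_zero _) (map_one _)] at h2
        exact h2
      exact exists_mono_minor_ne_zero _ (fun y => ⟨(B.map _).mulVec y, by
        rw [Matrix.mulVec_mulVec, h1, Matrix.one_mulVec]⟩)
    have hmn : m ≤ n := by
      obtain ⟨c, hcmono, -⟩ := hfield ℚ
      have hcinj : Function.Injective c := by
        intro x y h
        rcases lt_trichotomy x y with h' | h' | h'
        · exact absurd (hcmono _ _ h') (by rw [h]; exact lt_irrefl _)
        · exact h'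
        · exact absurd (hcmono _ _ h') (by rw [h]; exact lt_irrefl _)
      simpa using Fintype.card_le_of_injective c hcinj
    refine ⟨hmn, ?_⟩
    set d := S.gcd (fun c => (A.submatrix id c).det) with hd
    have hd0 : 0 ≤ d := by
      have h1 : normalize d = d := Finset.normalize_gcd
      rw [← h1, ← Int.abs_eq_normalize]
      exact abs_nonneg d
    by_contra hne
    have hna : d.natAbs ≠ 1 := by
      intro h
      rcases Int.natAbs_eq_iff.1 h with h' | h'
      · exact hne (by simpa using h')
      · rw [h'] at hd0; norm_num at hd0
    obtain ⟨p, hp, hpd⟩ := Nat.exists_prime_and_dvd hna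
    have hpd' : (p : ℤ) ∣ d := by
      have : ((d.natAbs : ℤ)) = d := Int.natAbs_of_nonneg hd0
      rw [← this]
      exact_mod_cast Int.natCast_dvd_natCast.2 hpd
    haveI : Fact p.Prime := ⟨hp⟩
    obtain ⟨c, hcmono, hcdet⟩ := hfield (ZMod p)
    apply hcdet
    have hsm : (A.map (Int.cast : ℤ → ZMod p)).submatrix id c
        = (A.submatrix id c).map (Int.cast : ℤ → ZMod p) := by
      ext i j; simp
    have hcS : c ∈ S := by
      rw [hS]; exact Finset.mem_filter.2 ⟨Finset.mem_univ _, hcmono⟩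
    have hdvd : (p : ℤ) ∣ (A.submatrix id c).det :=
      hpd'.trans (Finset.gcd_dvd hcS)
    rw [hsm]
    have h3 := (RingHom.map_det (Int.castRingHom (ZMod p)) (A.submatrix id c)).symm
    exact h3.trans ((ZMod.intCast_zmod_eq_zero_iff_dvd _ _).2 hdvd)
  · rintro ⟨hmn, hgcd⟩
    obtain ⟨μ, hμ⟩ := exists_sum_eq_finset_gcd S (fun c => (A.submatrix id c).det)
    rw [hgcd] at hμ
    refine ⟨∑ c ∈ S, μ c • (Matrix.of fun i j =>
      ∑ k, if i = c k then (A.submatrix id c).adjugate k j else 0), ?_⟩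
    rw [Matrix.mul_sum]
    have : ∀ c ∈ S, A * (μ c • (Matrix.of fun i j =>
        ∑ k, if i = c k then (A.submatrix id c).adjugate k j else 0))
        = (μ c * (A.submatrix id c).det) • (1 : Matrix (Fin m) (Fin m) ℤ) := by
      intro c _
      rw [Matrix.mul_smul, mul_adj_embed, smul_smul]
    rw [Finset.sum_congr rfl this, ← Finset.sum_smul, hμ, one_smul]
end

section
/- Let m, n be positive integers with m ≤ n and let A be an m×n matrix with integer entries. If the greatest common divisor of all m×m minors of A (the determinants of the m×m submatrices of A obtained by selecting m of the n columns) is 1, then there exists an n×m integer matrix B with A·B equal to the m×m identity matrix. -/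
lemma bezout_finset {ι : Type*} [DecidableEq ι] (s : Finset ι) (f : ι → ℤ) :
    ∃ x : ι → ℤ, ∑ c ∈ s, x c * f c = s.gcd f := by
  classical
  induction s using Finset.induction_on with
  | empty => exact ⟨0, by simp⟩
  | @insert a s ha ih =>
    obtain ⟨x, hx⟩ := ih
    set g := s.gcd f with hg
    refine ⟨fun c => if c = a then Int.gcdA (f a) g else Int.gcdB (f a) g * x c, ?_⟩
    rw [Finset.sum_insert ha, Finset.gcd_insert, ← Int.coe_gcd, Int.gcd_eq_gcd_ab]
    beta_reduce
    have h1 : ∑ c ∈ s, (if c = a then Int.gcdA (f a) g else Int.gcdB (f a) g * x c) * f c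
        = ∑ c ∈ s, Int.gcdB (f a) g * x c * f c :=
      Finset.sum_congr rfl fun c hc => by rw [if_neg (fun h : c = a => ha (h ▸ hc))]
    rw [if_pos rfl, h1]
    have h2 : ∑ c ∈ s, Int.gcdB (f a) g * x c * f c = Int.gcdB (f a) g * g := by
      rw [← hx, Finset.mul_sum]
      exact Finset.sum_congr rfl fun c _ => by ring
    rw [h2, ← hg]
    ring

/-- If `m ≤ n` (with `m, n ≥ 1`) and the gcd of all `m × m` minors of the
`m × n` integer matrix `A` (determinants of submatrices obtained by selecting `m` of the
`n` columns) is `1`, then there exists an `n × m` integer matrix `B` with `A * B = 1`. -/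
theorem stmt2 (m n : ℕ) (hm : 0 < m) (hn : 0 < n) (hmn : m ≤ n)
    (A : Matrix (Fin m) (Fin n) ℤ)
    (hgcd : Finset.gcd
        ((Finset.univ : Finset (Fin m → Fin n)).filter
          (fun c => ∀ a b : Fin m, a < b → c a < c b))
        (fun c => (A.submatrix id c).det) = 1) :
    ∃ B : Matrix (Fin n) (Fin m) ℤ, A * B = 1 := by
  classical
  set s := ((Finset.univ : Finset (Fin m → Fin n)).filter
      (fun c => ∀ a b : Fin m, a < b → c a < c b)) with hs
  obtain ⟨x, hx⟩ := bezout_finset s (fun c => (A.submatrix id c).det)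
  rw [hgcd] at hx
  refine ⟨Matrix.of fun i j => ∑ c ∈ s, x c * ∑ k : Fin m, if i = c k then
      (A.submatrix id c).adjugate k j else 0, ?_⟩
  ext a j
  rw [Matrix.mul_apply]
  simp only [Matrix.of_apply]
  have : ∀ c ∈ s, ∑ i : Fin n, A a i * (x c * ∑ k : Fin m, if i = c k then
      (A.submatrix id c).adjugate k j else 0)
      = x c * ((A.submatrix id c).det * (1 : Matrix (Fin m) (Fin m) ℤ) a j) := by
    intro c _
    have key : ∑ i : Fin n, A a i * ∑ k : Fin m, (if i = c k then
        (A.submatrix id c).adjugate k j else 0)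
        = ((A.submatrix id c) * (A.submatrix id c).adjugate) a j := by
      rw [Matrix.mul_apply]
      simp only [Finset.mul_sum, Matrix.submatrix_apply, id]
      rw [Finset.sum_comm]
      refine Finset.sum_congr rfl fun k _ => ?_
      simp [mul_ite]
    rw [Matrix.mul_adjugate] at key
    calc ∑ i : Fin n, A a i * (x c * ∑ k : Fin m, if i = c k then
          (A.submatrix id c).adjugate k j else 0)
        = x c * ∑ i : Fin n, A a i * ∑ k : Fin m, (if i = c k then
          (A.submatrix id c).adjugate k j else 0) := by
          rw [Finset.mul_sum]; exact Finset.sum_congr rfl fun i _ => by ring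
      _ = x c * ((A.submatrix id c).det * (1 : Matrix (Fin m) (Fin m) ℤ) a j) := by
          rw [key]; simp [Matrix.smul_apply]
  calc ∑ i : Fin n, A a i * ∑ c ∈ s, x c * ∑ k : Fin m, (if i = c k then
        (A.submatrix id c).adjugate k j else 0)
      = ∑ c ∈ s, ∑ i : Fin n, A a i * (x c * ∑ k : Fin m, if i = c k then
        (A.submatrix id c).adjugate k j else 0) := by
        simp_rw [Finset.mul_sum]; exact Finset.sum_comm
    _ = ∑ c ∈ s, x c * ((A.submatrix id c).det * (1 : Matrix (Fin m) (Fin m) ℤ) a j) :=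
        Finset.sum_congr rfl this
    _ = (∑ c ∈ s, x c * (A.submatrix id c).det) * (1 : Matrix (Fin m) (Fin m) ℤ) a j := by
        rw [Finset.sum_mul]; exact Finset.sum_congr rfl fun c _ => by ring
    _ = (1 : Matrix (Fin m) (Fin m) ℤ) a j := by rw [hx, one_mul]
end

section
/- Let n ≥ 3. For each m ∈ {1,…,n}, let σ_m be a permutation of the set {1,…,n}∖{m} that is a single (n−1)-cycle, i.e., whose cyclic group acts transitively on {1,…,n}∖{m}. Let G be the bipartite graph on the 2n vertices {v_1^+,…,v_n^+} ∪ {v_1^−,…,v_n^−} in which v_i^+ and v_j^− are adjacent if and only if there exists m ∈ {1,…,n} with i ≠ m and σ_m(i) = j. Then G is connected. -/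
/-- Let `n ≥ 3`. For each `m`, let `σ m` be a permutation of `Fin n` fixing
`m`, whose cyclic group acts transitively on the complement of `{m}` (i.e. `σ m` is a
single `(n-1)`-cycle on that complement). The bipartite graph on `Fin n ⊕ Fin n`
(left = plus vertices, right = minus vertices) in which `inl i` and `inr j` are adjacent
iff there is `m` with `i ≠ m` and `σ m i = j`, is connected. -/
theorem stmt4 (n : ℕ) (hn : 3 ≤ n) (σ : Fin n → Equiv.Perm (Fin n))
    (hfix : ∀ m : Fin n, σ m m = m)
    (hcyc : ∀ m i j : Fin n, i ≠ m → j ≠ m → ∃ p : ℕ, ((σ m) ^ p) i = j) :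
    (SimpleGraph.fromRel
      (fun x y : Fin n ⊕ Fin n =>
        ∃ i j m : Fin n, x = Sum.inl i ∧ y = Sum.inr j ∧ i ≠ m ∧ σ m i = j)).Connected := by
  classical
  set G := SimpleGraph.fromRel (fun x y : Fin n ⊕ Fin n =>
        ∃ i j m : Fin n, x = Sum.inl i ∧ y = Sum.inr j ∧ i ≠ m ∧ σ m i = j) with hG
  have hn0 : 0 < n := by omega
  have hne : ∀ (m i : Fin n), i ≠ m → σ m i ≠ m := by
    intro m i him h
    exact him ((σ m).injective (h.trans (hfix m).symm))
  have hadj : ∀ i m : Fin n, i ≠ m → G.Adj (Sum.inl i) (Sum.inr (σ m i)) := by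
    intro i m him
    rw [hG, SimpleGraph.fromRel_adj]
    exact ⟨by simp, Or.inl ⟨i, σ m i, m, rfl, rfl, him, rfl⟩⟩
  set base : Fin n := ⟨0, hn0⟩ with hbase
  set A : Finset (Fin n) := Finset.univ.filter
      (fun i => G.Reachable (Sum.inl base) (Sum.inl i)) with hA
  set B : Finset (Fin n) := Finset.univ.filter
      (fun j => G.Reachable (Sum.inl base) (Sum.inr j)) with hB
  have hAmem : ∀ i, i ∈ A ↔ G.Reachable (Sum.inl base) (Sum.inl i) := by
    intro i; simp [hA]
  have hBmem : ∀ j, j ∈ B ↔ G.Reachable (Sum.inl base) (Sum.inr j) := by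
    intro j; simp [hB]
  -- key: for i ≠ m, i ∈ A ↔ σ m i ∈ B
  have key : ∀ m i : Fin n, i ≠ m → (i ∈ A ↔ σ m i ∈ B) := by
    intro m i him
    constructor
    · intro hi
      exact (hBmem _).2 (((hAmem i).1 hi).trans (hadj i m him).reachable)
    · intro hj
      exact (hAmem i).2 (((hBmem _).1 hj).trans (hadj i m him).reachable.symm)
  -- σ m bijects A \ {m} onto B \ {m}
  have himg : ∀ m : Fin n, (A.erase m).image (σ m) = B.erase m := by
    intro m
    ext j
    simp only [Finset.mem_image, Finset.mem_erase]
    constructor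
    · rintro ⟨i, ⟨him, hi⟩, rfl⟩
      exact ⟨hne m i him, (key m i him).1 hi⟩
    · rintro ⟨hjm, hj⟩
      have h1 : (σ m).symm j ≠ m := by
        intro h; apply hjm; rw [← (σ m).apply_symm_apply j, h, hfix]
      refine ⟨(σ m).symm j, ⟨h1, ?_⟩, (σ m).apply_symm_apply j⟩
      have h2 := (key m ((σ m).symm j) h1).2
      rw [(σ m).apply_symm_apply] at h2
      exact h2 hj
  have hcard : ∀ m : Fin n, (A.erase m).card = (B.erase m).card := by
    intro m
    rw [← himg m, Finset.card_image_of_injective _ (σ m).injective]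
  -- counting: |A| = |B|
  have hterm : ∀ (S : Finset (Fin n)) (m : Fin n),
      (S.erase m).card + (if m ∈ S then 1 else 0) = S.card := by
    intro S m
    by_cases h : m ∈ S
    · rw [if_pos h, Finset.card_erase_of_mem h,
        Nat.sub_add_cancel (Finset.card_pos.2 ⟨m, h⟩)]
    · rw [if_neg h, Finset.erase_eq_of_notMem h, Nat.add_zero]
  have hsum : ∀ S : Finset (Fin n),
      (∑ m : Fin n, (S.erase m).card) + S.card = n * S.card := by
    intro S
    have h1 : (∑ m : Fin n, ((S.erase m).card + (if m ∈ S then 1 else 0)))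
        = n * S.card := by
      rw [Finset.sum_congr rfl (fun m _ => hterm S m)]
      simp [Finset.card_univ, mul_comm]
    rw [Finset.sum_add_distrib] at h1
    have h2 : (∑ m : Fin n, (if m ∈ S then 1 else 0)) = S.card := by
      simp [Finset.sum_ite_mem]
    rw [h2] at h1
    exact h1
  have hAB : A.card = B.card := by
    have hsA := hsum A
    have hsB := hsum B
    have hs : (∑ m : Fin n, (A.erase m).card) = ∑ m : Fin n, (B.erase m).card :=
      Finset.sum_congr rfl (fun m _ => hcard m)
    rw [hs] at hsA
    -- n * A.card - A.card = n * B.card - B.card with same sum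
    have h1 : A.card * (n - 1) = B.card * (n - 1) := by
      have e : ∀ x : ℕ, x * (n - 1) + x = n * x := by
        intro x
        have : (n - 1) + 1 = n := by omega
        calc x * (n - 1) + x = x * ((n - 1) + 1) := by ring
          _ = n * x := by rw [this, mul_comm]
      have eA := e A.card
      have eB := e B.card
      omega
    exact Nat.eq_of_mul_eq_mul_right (by omega) h1
  have hABset : A = B := by
    ext m
    have h1 := hcard m
    by_cases hmA : m ∈ A <;> by_cases hmB : m ∈ B
    · simp [hmA, hmB]
    · exfalso
      rw [Finset.card_erase_of_mem hmA, Finset.erase_eq_of_notMem hmB] at h1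
      have := Finset.card_pos.2 ⟨m, hmA⟩
      omega
    · exfalso
      rw [Finset.card_erase_of_mem hmB, Finset.erase_eq_of_notMem hmA] at h1
      have := Finset.card_pos.2 ⟨m, hmB⟩
      omega
    · simp [hmA, hmB]
  -- A \ {m} is invariant under σ m
  have hinv : ∀ (m i : Fin n), i ∈ A → i ≠ m → σ m i ∈ A := by
    intro m i hi him
    rw [hABset]
    exact (key m i him).1 hi
  have hpow : ∀ (m : Fin n) (p : ℕ) (i : Fin n), i ∈ A → i ≠ m →
      (((σ m) ^ p) i ∈ A ∧ ((σ m) ^ p) i ≠ m) := by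
    intro m p
    induction p with
    | zero => intro i hi him; simpa using ⟨hi, him⟩
    | succ q ih =>
      intro i hi him
      obtain ⟨h1, h2⟩ := ih i hi him
      have hstep : ((σ m) ^ (q + 1)) i = σ m (((σ m) ^ q) i) := by
        rw [pow_succ']
        rfl
      rw [hstep]
      exact ⟨hinv m _ h1 h2, hne m _ h2⟩
  have hbaseA : base ∈ A := (hAmem base).2 (SimpleGraph.Reachable.refl _)
  have hAuniv : ∀ i : Fin n, i ∈ A := by
    intro i
    by_cases hib : i = base
    · rw [hib]; exact hbaseA
    · -- pick m different from base and i
      obtain ⟨m, hm1, hm2⟩ : ∃ m : Fin n, m ≠ base ∧ m ≠ i := by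
        have hc : ({base, i} : Finset (Fin n)).card ≤ 2 := by
          apply le_trans (Finset.card_insert_le _ _)
          simp
        have hcompl : 0 < (({base, i} : Finset (Fin n))ᶜ).card := by
          rw [Finset.card_compl]
          simp only [Fintype.card_fin]
          omega
        obtain ⟨m, hm⟩ := Finset.card_pos.1 hcompl
        simp only [Finset.mem_compl, Finset.mem_insert, Finset.mem_singleton,
          not_or] at hm
        exact ⟨m, hm.1, hm.2⟩
      obtain ⟨p, hp⟩ := hcyc m base i (Ne.symm hm1) (Ne.symm hm2)
      have := (hpow m p base hbaseA (Ne.symm hm1)).1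
      rwa [hp] at this
  have hBuniv : ∀ j : Fin n, j ∈ B := by
    intro j
    rw [← hABset]
    exact hAuniv j
  have hreach : ∀ v : Fin n ⊕ Fin n, G.Reachable (Sum.inl base) v := by
    intro v
    cases v with
    | inl i => exact (hAmem i).1 (hAuniv i)
    | inr j => exact (hBmem j).1 (hBuniv j)
  have : Nonempty (Fin n ⊕ Fin n) := ⟨Sum.inl base⟩
  exact ⟨fun u v => (hreach u).symm.trans (hreach v)⟩
end

section
/- Let n ≥ 3. For each m ∈ {1,…,n}, let σ_m be a permutation of the set {1,…,n}∖{m} that is a single (n−1)-cycle, i.e., whose cyclic group acts transitively on {1,…,n}∖{m}. Let G be the bipartite graph on the 2n vertices {v_1^+,…,v_n^+} ∪ {v_1^−,…,v_n^−} in which v_i^+ and v_j^− are adjacent if and only if there exists m with i ≠ m and σ_m(i) = j. Suppose the vertex set of G is partitioned into two nonempty sets V_1 and V_2 such that no edge of G joins a vertex of V_1 to a vertex of V_2, and set V_i^± = V_i ∩ {v_1^±,…,v_n^±} for i = 1,2. Then |V_1^+| = |V_1^−| and |V_2^+| = |V_2^−|. -/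
/-- With `n ≥ 3` and `σ` as in Statement 4, if the vertex set of the
bipartite graph `G` on `Fin n ⊕ Fin n` (adjacency: `inl i ~ inr j` iff `∃ m, i ≠ m ∧
σ m i = j`) is partitioned into two nonempty sets `V₁`, `V₂` with no edge of `G`
joining `V₁` to `V₂`, then the number of plus (left) vertices in `V₁` equals the number
of minus (right) vertices in `V₁`, and similarly for `V₂`. -/
theorem stmt5 (n : ℕ) (hn : 3 ≤ n) (σ : Fin n → Equiv.Perm (Fin n))
    (hfix : ∀ m : Fin n, σ m m = m)
    (hcyc : ∀ m i j : Fin n, i ≠ m → j ≠ m → ∃ p : ℕ, ((σ m) ^ p) i = j)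
    (V₁ V₂ : Finset (Fin n ⊕ Fin n))
    (hne₁ : V₁.Nonempty) (hne₂ : V₂.Nonempty)
    (hdisj : Disjoint V₁ V₂) (hunion : V₁ ∪ V₂ = Finset.univ)
    (hsep : ∀ x ∈ V₁, ∀ y ∈ V₂,
      ¬ (SimpleGraph.fromRel
          (fun x y : Fin n ⊕ Fin n =>
            ∃ i j m : Fin n, x = Sum.inl i ∧ y = Sum.inr j ∧ i ≠ m ∧ σ m i = j)).Adj x y) :
    (V₁.filter (fun x => x.isLeft = true)).card
        = (V₁.filter (fun x => x.isRight = true)).card ∧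
      (V₂.filter (fun x => x.isLeft = true)).card
        = (V₂.filter (fun x => x.isRight = true)).card := by
  classical
  have hmem : ∀ x : Fin n ⊕ Fin n, x ∉ V₁ ↔ x ∈ V₂ := by
    intro x
    constructor
    · intro hx
      have hx' : x ∈ V₁ ∪ V₂ := hunion ▸ Finset.mem_univ x
      rcases Finset.mem_union.mp hx' with h | h
      · exact absurd h hx
      · exact h
    · intro hx hx1
      exact (Finset.disjoint_left.mp hdisj hx1) hx
  have hσne : ∀ m i : Fin n, i ≠ m → σ m i ≠ m := by
    intro m i him h
    exact him ((σ m).injective (h.trans (hfix m).symm))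
  have hadj : ∀ (m i : Fin n), i ≠ m → (Sum.inl i ∈ V₁ ↔ Sum.inr (σ m i) ∈ V₁) := by
    intro m i him
    have hA : (SimpleGraph.fromRel
        (fun x y : Fin n ⊕ Fin n =>
          ∃ i j m : Fin n, x = Sum.inl i ∧ y = Sum.inr j ∧ i ≠ m ∧ σ m i = j)).Adj
        (Sum.inl i) (Sum.inr (σ m i)) := by
      refine ⟨by simp, Or.inl ⟨i, σ m i, m, rfl, rfl, him, rfl⟩⟩
    constructor
    · intro h1
      by_contra h2
      exact hsep _ h1 _ ((hmem _).mp h2) hA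
    · intro h1
      by_contra h2
      exact hsep _ h1 _ ((hmem _).mp h2) hA.symm
  set L₁ : Finset (Fin n) := Finset.univ.filter (fun i => Sum.inl i ∈ V₁) with hL₁def
  set R₁ : Finset (Fin n) := Finset.univ.filter (fun j => Sum.inr j ∈ V₁) with hR₁def
  have hE : ∀ m : Fin n, (L₁.erase m).card = (R₁.erase m).card := by
    intro m
    apply Finset.card_bij' (fun i _ => σ m i) (fun j _ => (σ m)⁻¹ j)
    · intro i hi
      simp only [hL₁def, Finset.mem_erase, Finset.mem_filter, Finset.mem_univ, true_and] at hi
      simp only [hR₁def, Finset.mem_erase, Finset.mem_filter, Finset.mem_univ, true_and]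
      exact ⟨hσne m i hi.1, (hadj m i hi.1).mp hi.2⟩
    · intro j hj
      simp only [hR₁def, Finset.mem_erase, Finset.mem_filter, Finset.mem_univ, true_and] at hj
      simp only [hL₁def, Finset.mem_erase, Finset.mem_filter, Finset.mem_univ, true_and]
      have hne : (σ m)⁻¹ j ≠ m := by
        intro h
        apply hj.1
        have hj' : σ m ((σ m)⁻¹ j) = σ m m := by rw [h]
        rw [Equiv.Perm.coe_inv, Equiv.apply_symm_apply, hfix] at hj'
        exact hj'
      constructor
      · exact hne
      · have hh := (hadj m ((σ m)⁻¹ j) hne)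
        rw [Equiv.Perm.coe_inv, Equiv.apply_symm_apply] at hh
        exact hh.mpr hj.2
    · intro i _; exact (σ m).symm_apply_apply i
    · intro j _; exact (σ m).apply_symm_apply j
  have hcard : L₁.card = R₁.card := by
    by_contra hne
    have key : ∀ m : Fin n, (m ∈ L₁ ↔ m ∉ R₁) := by
      intro m
      by_contra h
      have h' : m ∈ L₁ ↔ m ∈ R₁ := by tauto
      apply hne
      by_cases hm : m ∈ L₁
      · have hm' := h'.mp hm
        have hEm := hE m
        rw [Finset.card_erase_of_mem hm, Finset.card_erase_of_mem hm'] at hEm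
        have h1 : 1 ≤ L₁.card := Finset.card_pos.mpr ⟨m, hm⟩
        have h2 : 1 ≤ R₁.card := Finset.card_pos.mpr ⟨m, hm'⟩
        omega
      · have hm' : m ∉ R₁ := fun hh => hm (h'.mpr hh)
        have hEm := hE m
        rw [Finset.erase_eq_of_notMem hm, Finset.erase_eq_of_notMem hm'] at hEm
        exact hEm
    by_cases hL : L₁.Nonempty
    · by_cases hLc : ∃ m, m ∉ L₁
      · obtain ⟨m, hm⟩ := hL
        obtain ⟨m', hm'⟩ := hLc
        have hmR : m ∉ R₁ := (key m).mp hm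
        have hm'R : m' ∈ R₁ := by
          by_contra h
          exact hm' ((key m').mpr h)
        have hEm := hE m
        rw [Finset.card_erase_of_mem hm, Finset.erase_eq_of_notMem hmR] at hEm
        have hEm' := hE m'
        rw [Finset.erase_eq_of_notMem hm', Finset.card_erase_of_mem hm'R] at hEm'
        have h1 : 1 ≤ L₁.card := Finset.card_pos.mpr ⟨m, hm⟩
        have h2 : 1 ≤ R₁.card := Finset.card_pos.mpr ⟨m', hm'R⟩
        omega
      · push_neg at hLc
        have hRempty : R₁ = ∅ := by
          apply Finset.eq_empty_of_forall_notMem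
          intro m hm
          exact (key m).mp (hLc m) hm
        have hLuniv : L₁ = Finset.univ := Finset.eq_univ_of_forall hLc
        obtain ⟨m, hm⟩ := hL
        have hEm := hE m
        rw [hRempty, hLuniv] at hEm
        rw [Finset.card_erase_of_mem (Finset.mem_univ m)] at hEm
        simp [Finset.card_univ] at hEm
        omega
    · rw [Finset.not_nonempty_iff_eq_empty] at hL
      have hRuniv : R₁ = Finset.univ := by
        apply Finset.eq_univ_of_forall
        intro m
        by_contra h
        have hmm : m ∈ L₁ := (key m).mpr h
        rw [hL] at hmm
        exact absurd hmm (Finset.notMem_empty m)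
      have m0 : Fin n := ⟨0, by omega⟩
      have hEm := hE m0
      rw [hL, hRuniv, Finset.card_erase_of_mem (Finset.mem_univ m0)] at hEm
      simp [Finset.card_univ] at hEm
      omega
  have hVleft : ∀ V : Finset (Fin n ⊕ Fin n),
      (V.filter (fun x => x.isLeft = true))
        = (Finset.univ.filter (fun i => Sum.inl i ∈ V)).image Sum.inl := by
    intro V
    ext x
    cases x <;> simp
  have hVright : ∀ V : Finset (Fin n ⊕ Fin n),
      (V.filter (fun x => x.isRight = true))
        = (Finset.univ.filter (fun j => Sum.inr j ∈ V)).image Sum.inr := by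
    intro V
    ext x
    cases x <;> simp
  constructor
  · rw [hVleft V₁, hVright V₁,
      Finset.card_image_of_injective _ Sum.inl_injective,
      Finset.card_image_of_injective _ Sum.inr_injective]
    exact hcard
  · rw [hVleft V₂, hVright V₂,
      Finset.card_image_of_injective _ Sum.inl_injective,
      Finset.card_image_of_injective _ Sum.inr_injective]
    have hL2 : (Finset.univ.filter (fun i => Sum.inl i ∈ V₂)) = L₁ᶜ := by
      ext i
      simp [hL₁def, Finset.mem_compl, ← hmem (Sum.inl i)]
    have hR2 : (Finset.univ.filter (fun j => Sum.inr j ∈ V₂)) = R₁ᶜ := by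
      ext j
      simp [hR₁def, Finset.mem_compl, ← hmem (Sum.inr j)]
    rw [hL2, hR2, Finset.card_compl, Finset.card_compl, hcard]
end

section
/- Let n ≥ 3. For each m ∈ {1,…,n}, let σ_m be a permutation of the set {1,…,n}∖{m} that is a single (n−1)-cycle, i.e., whose cyclic group acts transitively on {1,…,n}∖{m}. Let G be the bipartite graph on the 2n vertices {v_1^+,…,v_n^+} ∪ {v_1^−,…,v_n^−} in which v_i^+ and v_j^− are adjacent if and only if there exists m with i ≠ m and σ_m(i) = j. Suppose the vertex set of G is partitioned into two nonempty sets V_1 and V_2 such that no edge of G joins a vertex of V_1 to a vertex of V_2. Then for every m ∈ {1,…,n}, v_m^+ ∈ V_1 if and only if v_m^− ∈ V_1. -/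
/-- With `n ≥ 3` and `σ` as in Statement 4, if the vertex set of the
bipartite graph `G` on `Fin n ⊕ Fin n` (adjacency: `inl i ~ inr j` iff `∃ m, i ≠ m ∧
σ m i = j`) is partitioned into two nonempty sets `V₁`, `V₂` with no edge of `G`
joining `V₁` to `V₂`, then for every `m`, the plus vertex `inl m` lies in `V₁` if and
only if the minus vertex `inr m` lies in `V₁`. -/
theorem stmt6 (n : ℕ) (hn : 3 ≤ n) (σ : Fin n → Equiv.Perm (Fin n))
    (hfix : ∀ m : Fin n, σ m m = m)
    (hcyc : ∀ m i j : Fin n, i ≠ m → j ≠ m → ∃ p : ℕ, ((σ m) ^ p) i = j)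
    (V₁ V₂ : Finset (Fin n ⊕ Fin n))
    (hne₁ : V₁.Nonempty) (hne₂ : V₂.Nonempty)
    (hdisj : Disjoint V₁ V₂) (hunion : V₁ ∪ V₂ = Finset.univ)
    (hsep : ∀ x ∈ V₁, ∀ y ∈ V₂,
      ¬ (SimpleGraph.fromRel
          (fun x y : Fin n ⊕ Fin n =>
            ∃ i j m : Fin n, x = Sum.inl i ∧ y = Sum.inr j ∧ i ≠ m ∧ σ m i = j)).Adj x y) :
    ∀ m : Fin n, Sum.inl m ∈ V₁ ↔ Sum.inr m ∈ V₁ := by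
  have hnt : Nontrivial (Fin n) := Fin.nontrivial_iff_two_le.mpr (by omega)
  have mem_or : ∀ x : Fin n ⊕ Fin n, x ∈ V₁ ∨ x ∈ V₂ := fun x =>
    Finset.mem_union.mp (hunion ▸ Finset.mem_univ x)
  have adj : ∀ i m : Fin n, i ≠ m →
      (SimpleGraph.fromRel
          (fun x y : Fin n ⊕ Fin n =>
            ∃ i j m : Fin n, x = Sum.inl i ∧ y = Sum.inr j ∧ i ≠ m ∧ σ m i = j)).Adj
        (Sum.inl i) (Sum.inr (σ m i)) :=
    fun i m h => ⟨by simp, Or.inl ⟨i, σ m i, m, rfl, rfl, h, rfl⟩⟩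
  -- the basic step: a vertex and its neighbor lie on the same side
  have stepIff : ∀ i m : Fin n, i ≠ m → (Sum.inl i ∈ V₁ ↔ Sum.inr (σ m i) ∈ V₁) := by
    intro i m h
    constructor
    · intro h1
      rcases mem_or (Sum.inr (σ m i)) with h2 | h2
      · exact h2
      · exact absurd (adj i m h) (hsep _ h1 _ h2)
    · intro h1
      rcases mem_or (Sum.inl i) with h2 | h2
      · exact h2
      · exact absurd (adj i m h).symm (hsep _ h1 _ h2)
  have stepIff' : ∀ j m : Fin n, j ≠ m → (Sum.inr j ∈ V₁ ↔ Sum.inl ((σ m)⁻¹ j) ∈ V₁) := by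
    intro j m h
    have hne : (σ m)⁻¹ j ≠ m := by
      intro hc
      apply h
      have := congrArg (σ m) hc
      rwa [Equiv.Perm.coe_inv, Equiv.apply_symm_apply, hfix] at this
    have := stepIff ((σ m)⁻¹ j) m hne
    rw [Equiv.Perm.coe_inv, Equiv.apply_symm_apply] at this
    exact this.symm
  set A : Finset (Fin n) := Finset.univ.filter (fun i => Sum.inl i ∈ V₁) with hAdef
  set B : Finset (Fin n) := Finset.univ.filter (fun j => Sum.inr j ∈ V₁) with hBdef
  have memA : ∀ i, i ∈ A ↔ Sum.inl i ∈ V₁ := fun i => by simp [hAdef]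
  have memB : ∀ j, j ∈ B ↔ Sum.inr j ∈ V₁ := fun j => by simp [hBdef]
  suffices hAB : A = B by
    intro m
    rw [← memA, ← memB, hAB]
  by_cases hA : A = Finset.univ
  · have hB : B = Finset.univ := by
      apply Finset.eq_univ_iff_forall.mpr
      intro j
      obtain ⟨m, hm⟩ := exists_ne j
      have h1 : Sum.inl ((σ m)⁻¹ j) ∈ V₁ := by
        rw [← memA, hA]; exact Finset.mem_univ _
      exact (memB j).mpr ((stepIff' j m hm.symm).mpr h1)
    rw [hA, hB]
  by_cases hB : B = Finset.univ
  · exfalso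
    apply hA
    apply Finset.eq_univ_iff_forall.mpr
    intro i
    obtain ⟨m, hm⟩ := exists_ne i
    have h1 : Sum.inr (σ m i) ∈ V₁ := by
      rw [← memB, hB]; exact Finset.mem_univ _
    exact (memA i).mpr ((stepIff i m hm.symm).mpr h1)
  -- both A and B are proper subsets
  obtain ⟨m', hm'B⟩ : ∃ m', m' ∉ B := by
    by_contra hc
    push_neg at hc
    exact hB (Finset.eq_univ_iff_forall.mpr hc)
  have himg' : B.image (fun j => (σ m')⁻¹ j) ⊆ A := by
    intro x hx
    rcases Finset.mem_image.mp hx with ⟨j, hj, rfl⟩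
    have hjm : j ≠ m' := fun hc => hm'B (hc ▸ hj)
    exact (memA _).mpr ((stepIff' j m' hjm).mp ((memB j).mp hj))
  have cBA : B.card ≤ A.card := by
    calc B.card = (B.image (fun j => (σ m')⁻¹ j)).card :=
          (Finset.card_image_of_injective _ (σ m')⁻¹.injective).symm
      _ ≤ A.card := Finset.card_le_card himg'
  -- for every m₀ ∉ A, the image of A under σ m₀ is exactly B, hence m₀ ∉ B
  have keyimg : ∀ m₀ : Fin n, m₀ ∉ A → A.image (σ m₀) = B := by
    intro m₀ hm₀
    have himg : A.image (σ m₀) ⊆ B := by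
      intro y hy
      rcases Finset.mem_image.mp hy with ⟨i, hi, rfl⟩
      have him : i ≠ m₀ := fun hc => hm₀ (hc ▸ hi)
      exact (memB _).mpr ((stepIff i m₀ him).mp ((memA i).mp hi))
    apply Finset.eq_of_subset_of_card_le himg
    rw [Finset.card_image_of_injective _ (σ m₀).injective]
    exact cBA
  have hBA : B ⊆ A := by
    intro j hj
    by_contra hjA
    have := keyimg j hjA
    rw [← this] at hj
    rcases Finset.mem_image.mp hj with ⟨i, hi, hij⟩
    have : i = j := by
      have : σ j i = σ j j := by rw [hij, hfix]
      exact (σ j).injective this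
    exact hjA (this ▸ hi)
  -- and card A ≤ card B since there is m₀ ∉ A
  obtain ⟨m₀, hm₀A⟩ : ∃ m₀, m₀ ∉ A := by
    by_contra hc
    push_neg at hc
    exact hA (Finset.eq_univ_iff_forall.mpr hc)
  have cAB : A.card ≤ B.card := by
    rw [← keyimg m₀ hm₀A, Finset.card_image_of_injective _ (σ m₀).injective]
  exact (Finset.eq_of_subset_of_card_le hBA cAB).symm
end

section
/- Let n ≥ 2 and let k_1, …, k_n be integers with k_i ≥ 1 for all i and k_1 k_2 ⋯ k_n ≥ 3. Then there is no n×n integer matrix B such that A·B equals the n×n identity matrix, where A = (a_{ij}) is the n×n matrix with a_{ii} = k_i for 1 ≤ i ≤ n, a_{i,i+1} = −1 for 1 ≤ i ≤ n−1, a_{n,1} = −1, and a_{ij} = 0 otherwise. -/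
/-- For `n ≥ 2` and integers `k i ≥ 1` with `∏ k i ≥ 3`, the `n × n`
matrix with diagonal entries `k i`, superdiagonal entries `-1`, bottom-left entry `-1`,
and `0` elsewhere, admits no right inverse: there is no `n × n` integer matrix `B` with
`A * B = 1`. -/
theorem stmt10 (n : ℕ) (hn : 2 ≤ n) (k : Fin n → ℤ)
    (hk : ∀ i, 1 ≤ k i) (hprod : 3 ≤ ∏ i, k i) :
    ¬ ∃ B : Matrix (Fin n) (Fin n) ℤ,
        (Matrix.of fun i j : Fin n =>
            if i = j then k i
            else if (j : ℕ) = (i : ℕ) + 1 then (-1 : ℤ)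
            else if (i : ℕ) = n - 1 ∧ (j : ℕ) = 0 then (-1 : ℤ)
            else 0) * B = 1 := by
  rintro ⟨B, hB⟩
  set A : Matrix (Fin n) (Fin n) ℤ := Matrix.of fun i j : Fin n =>
            if i = j then k i
            else if (j : ℕ) = (i : ℕ) + 1 then (-1 : ℤ)
            else if (i : ℕ) = n - 1 ∧ (j : ℕ) = 0 then (-1 : ℤ)
            else 0 with hA
  set P := ∏ i, k i with hP
  set v : Fin n → ℤ :=
    fun i => ∏ j ∈ Finset.univ.filter (fun j : Fin n => (j : ℕ) < (i : ℕ)), k j with hv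
  set i0 : Fin n := ⟨0, by omega⟩ with hi0def
  set iN : Fin n := ⟨n - 1, by omega⟩ with hiNdef
  have hv0 : v i0 = 1 := by
    have he : Finset.univ.filter (fun j : Fin n => (j : ℕ) < (i0 : ℕ)) = ∅ := by
      ext j
      simp [hi0def]
    rw [hv]
    simp only [he, Finset.prod_empty]
  have hstep : ∀ i : Fin n, k i * v i =
      ∏ j ∈ Finset.univ.filter (fun j : Fin n => (j : ℕ) < (i : ℕ) + 1), k j := by
    intro i
    have hset : Finset.univ.filter (fun j : Fin n => (j : ℕ) < (i : ℕ) + 1)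
        = insert i (Finset.univ.filter (fun j : Fin n => (j : ℕ) < (i : ℕ))) := by
      ext j
      simp only [Finset.mem_filter, Finset.mem_univ, true_and, Finset.mem_insert, Fin.ext_iff]
      omega
    rw [hset, Finset.prod_insert (by simp)]
  have hAv : ∀ i : Fin n, A.mulVec v i = if (i : ℕ) = n - 1 then P - 1 else 0 := by
    intro i
    have hmv : A.mulVec v i = ∑ j, A i j * v j := rfl
    by_cases hi : (i : ℕ) = n - 1
    · -- last row
      have hi0 : i ≠ i0 := by
        intro h; apply_fun (Fin.val) at h; simp [hi0def] at h; omega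
      have key : A.mulVec v i = ∑ j, ((if j = i then k i * v i else 0)
          + (if j = i0 then -(v i0) else 0)) := by
        rw [hmv]
        apply Finset.sum_congr rfl
        intro j _
        have hi0v : (i0 : ℕ) = 0 := rfl
        rcases eq_or_ne j i with rfl | hji
        · have hAd : A j j = k j := by
            simp only [hA, Matrix.of_apply]
            split_ifs with h1
            · rfl
            · exact absurd trivial h1
          rw [hAd, if_pos rfl, if_neg hi0]
          ring
        · rcases eq_or_ne j i0 with rfl | hj0
          · have hAc : A i i0 = -1 := by
              simp only [hA, Matrix.of_apply]
              split_ifs with h1 h2 h3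
              · exact absurd h1 hi0
              · rfl
              · rfl
              · exact absurd ⟨hi, rfl⟩ h3
            rw [hAc, if_neg hji, if_pos rfl]
            ring
          · have hAz : A i j = 0 := by
              simp only [hA, Matrix.of_apply]
              split_ifs with h1 h2 h3
              · exact absurd h1.symm hji
              · exact absurd h2 (by have := j.isLt; omega)
              · exact absurd (Fin.ext (h3.2.trans hi0v.symm)) hj0
              · rfl
            rw [hAz, if_neg hji, if_neg hj0]
            ring
      rw [key, Finset.sum_add_distrib, Finset.sum_ite_eq' Finset.univ,
        Finset.sum_ite_eq' Finset.univ]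
      simp only [Finset.mem_univ, if_true]
      have h2 : k i * v i = P := by
        rw [hstep i, hP]
        apply Finset.prod_congr _ (fun _ _ => rfl)
        ext j
        simp only [Finset.mem_filter, Finset.mem_univ, true_and, iff_true]
        have := j.isLt
        omega
      rw [hv0, h2, if_pos hi]
      ring
    · -- other rows
      have hilt : (i : ℕ) + 1 < n := by have := i.isLt; omega
      set j1 : Fin n := ⟨(i : ℕ) + 1, hilt⟩ with hj1
      have hij1 : i ≠ j1 := by
        intro h; apply_fun Fin.val at h; simp [hj1] at h
      have key : A.mulVec v i = ∑ j, ((if j = i then k i * v i else 0)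
          + (if j = j1 then -(v j1) else 0)) := by
        rw [hmv]
        apply Finset.sum_congr rfl
        intro j _
        have hj1v : (j1 : ℕ) = (i : ℕ) + 1 := rfl
        rcases eq_or_ne j i with rfl | hji
        · have hAd : A j j = k j := by
            simp only [hA, Matrix.of_apply]
            split_ifs with h1
            · rfl
            · exact absurd trivial h1
          rw [hAd, if_pos rfl, if_neg hij1]
          ring
        · rcases eq_or_ne j j1 with rfl | hjj1
          · have hAs : A i j1 = -1 := by
              simp only [hA, Matrix.of_apply]
              split_ifs with h1
              · exact absurd h1 hij1
              · rfl
            rw [hAs, if_neg hji, if_pos rfl]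
            ring
          · have hAz : A i j = 0 := by
              simp only [hA, Matrix.of_apply]
              split_ifs with h1 h2 h3
              · exact absurd h1.symm hji
              · exact absurd (Fin.ext (h2.trans hj1v.symm)) hjj1
              · exact absurd h3.1 hi
              · rfl
            rw [hAz, if_neg hji, if_neg hjj1]
            ring
      rw [key, Finset.sum_add_distrib, Finset.sum_ite_eq' Finset.univ,
        Finset.sum_ite_eq' Finset.univ]
      simp only [Finset.mem_univ, if_true]
      have h2 : k i * v i = v j1 := hstep i
      rw [h2, if_neg hi]
      ring
  -- from AB = 1 get BA = 1
  have hBA : B * A = 1 := mul_eq_one_comm.mp hB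
  have hvv : v = B.mulVec (A.mulVec v) := by
    rw [Matrix.mulVec_mulVec, hBA, Matrix.one_mulVec]
  have hdvd : (P - 1) ∣ 1 := by
    have hthis := congrFun hvv i0
    rw [hv0] at hthis
    have hmv : B.mulVec (A.mulVec v) i0 = ∑ j, B i0 j * A.mulVec v j := rfl
    rw [hmv] at hthis
    have hsum : ∑ j, B i0 j * A.mulVec v j = B i0 iN * (P - 1) := by
      have hpt : ∀ j : Fin n, B i0 j * A.mulVec v j
          = if j = iN then B i0 iN * (P - 1) else 0 := by
        intro j
        rw [hAv j]
        rcases eq_or_ne j iN with rfl | hj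
        · rw [if_pos rfl, if_pos rfl]
        · rw [if_neg (by intro h; exact hj (Fin.ext h)), if_neg hj, mul_zero]
      rw [Finset.sum_congr rfl (fun j _ => hpt j), Finset.sum_ite_eq' Finset.univ]
      simp
    rw [hsum] at hthis
    exact ⟨B i0 iN, by rw [mul_comm]; exact hthis⟩
  have := Int.le_of_dvd one_pos hdvd
  omega
end
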